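/- For a symmetric nonlinear connection on T*M, the Poisson bracket of f, g ∈ C^∞(T*M) is {f,g} = ⟨d^H f, d^V g⟩ − ⟨d^H g, d^V f⟩; conversely if this formula holds for all f, g then the connection is symmetric. Moreover, for a symmetric connection, the curvature satisfies the cyclic identity ⟨R(X,Y), Z⟩ + ⟨R(Y,Z), X⟩ + ⟨R(Z,X), Y⟩ = 0 for all X, Y, Z ∈ Γ(π_M*TM). -/

import Mathlib

noncomputable section

/-- The cotangent bundle `T*M` of `M = ℝⁿ` in canonical coordinates `(x, p)`. -/
abbrev TT (n : ℕ) := (Fin n → ℝ) × (Fin n → ℝ)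

/-- The canonical symplectic form `ω₀ = −dθ₀ = dxⁱ ∧ dpᵢ` of `T*M`. -/
def ωc {n : ℕ} (a b : TT n) : ℝ := (∑ i, a.1 i * b.2 i) - ∑ i, b.1 i * a.2 i

/-- Horizontal lift of a vector field `X` along `π_M` for the Ehresmann connection with
coefficients `Γ` (so `H_i = ∂/∂xⁱ − Γᵢⱼ ∂/∂pⱼ`, `Γᵢⱼ = Γ i p j`). -/
def hlC {n : ℕ} (Γ : Fin n → TT n → (Fin n → ℝ)) (X : TT n → (Fin n → ℝ))
    (p : TT n) : TT n :=
  (X p, fun j => -(∑ i, X p i * Γ i p j))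

/-- The horizontal differential `d^H f` of `f ∈ C^∞(T*M)`: `⟨d^H f, X⟩ = X^H(f)`,
so `(d^H f)ᵢ = H_i(f)`. -/
def dHf {n : ℕ} (Γ : Fin n → TT n → (Fin n → ℝ)) (f : TT n → ℝ) (p : TT n) :
    Fin n → ℝ :=
  fun i => fderiv ℝ f p (Pi.single i 1, -(Γ i p))

/-- The vertical differential `d^V f` of `f ∈ C^∞(T*M)`: `⟨α, d^V f⟩ = α^V(f)`,
so `(d^V f)ⁱ = ∂f/∂pᵢ`. -/
def dVf {n : ℕ} (f : TT n → ℝ) (p : TT n) : Fin n → ℝ :=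
  fun i => fderiv ℝ f p (0, Pi.single i 1)

/-- The canonical Hamiltonian vector field of `f` on `T*ℝⁿ`: `i_{X_f}ω₀ = df`, so
`X_f = (∂f/∂p, −∂f/∂x)`. -/
def XhamD {n : ℕ} (f : TT n → ℝ) (p : TT n) : TT n :=
  (dVf f p, fun i => -(fderiv ℝ f p (Pi.single i 1, 0)))

/-- Lie bracket of vector fields on `T*M`. -/
def lieC {n : ℕ} (U W : TT n → TT n) (p : TT n) : TT n :=
  fderiv ℝ W p (U p) - fderiv ℝ U p (W p)

/-- Connector of the nonlinear connection on `T*M`. -/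
def kcC {n : ℕ} (Γ : Fin n → TT n → (Fin n → ℝ)) (W : TT n → TT n) (p : TT n) :
    Fin n → ℝ :=
  fun j => (W p).2 j + ∑ i, (W p).1 i * Γ i p j

/-- Curvature `R(X,Y) = κ([X^H, Y^H])` of the nonlinear connection on `T*M`. -/
def RC {n : ℕ} (Γ : Fin n → TT n → (Fin n → ℝ)) (X Y : TT n → (Fin n → ℝ))
    (p : TT n) : Fin n → ℝ :=
  kcC Γ (lieC (hlC Γ X) (hlC Γ Y)) p

variable {n : ℕ}

lemma sum_single_mul (i : Fin n) (v : Fin n → ℝ) :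
    ∑ k, (Pi.single i 1 : Fin n → ℝ) k * v k = v i := by
  simp [Pi.single_apply, ite_mul]

lemma omega_hl (Γ : Fin n → TT n → (Fin n → ℝ)) (X Y : TT n → (Fin n → ℝ)) (p : TT n) :
    ωc (hlC Γ X p) (hlC Γ Y p)
      = (∑ j, ∑ i, Y p j * (X p i * Γ i p j)) - ∑ j, ∑ i, X p j * (Y p i * Γ i p j) := by
  simp [ωc, hlC, mul_neg, Finset.mul_sum, sub_neg_eq_add]
  ring_nf

lemma sym_of (Γ : Fin n → TT n → (Fin n → ℝ))
    (h : ∀ X Y p, ωc (hlC Γ X p) (hlC Γ Y p) = 0) (a b : Fin n) (p : TT n) :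
    Γ a p b = Γ b p a := by
  have h2 := h (fun _ => Pi.single a 1) (fun _ => Pi.single b 1) p
  rw [omega_hl] at h2
  simp only [Pi.single_apply, ite_mul, one_mul, zero_mul, mul_ite, mul_zero, mul_one,
    Finset.sum_ite_eq', Finset.mem_univ, if_true] at h2
  linarith

lemma sym_to (Γ : Fin n → TT n → (Fin n → ℝ))
    (hs : ∀ a b p, Γ a p b = Γ b p a) :
    ∀ X Y p, ωc (hlC Γ X p) (hlC Γ Y p) = 0 := by
  intro X Y p
  rw [omega_hl, sub_eq_zero, Finset.sum_comm]
  exact Finset.sum_congr rfl fun a _ => Finset.sum_congr rfl fun b _ => by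
    rw [hs a b]; ring

lemma snd_decomp (v : Fin n → ℝ) :
    ((0, v) : TT n) = ∑ j, v j • (((0 : Fin n → ℝ), (Pi.single j 1 : Fin n → ℝ)) : TT n) := by
  apply Prod.ext
  · rw [Prod.fst_sum]; simp
  · rw [Prod.snd_sum]
    simp only [Prod.smul_mk, Prod.snd]
    rw [show (∑ j, v j • (Pi.single j 1 : Fin n → ℝ)) = ∑ j, Pi.single j (v j) by
      refine Finset.sum_congr rfl fun j _ => ?_
      rw [← Pi.single_smul, smul_eq_mul, mul_one]]
    exact (Finset.univ_sum_single v).symm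

lemma hl_decomp (Γ : Fin n → TT n → (Fin n → ℝ)) (Y : TT n → (Fin n → ℝ)) (p : TT n) :
    hlC Γ Y p = ∑ b, Y p b • (((Pi.single b 1 : Fin n → ℝ), -(Γ b p)) : TT n) := by
  apply Prod.ext
  · rw [Prod.fst_sum]
    simp only [Prod.smul_mk, Prod.fst]
    rw [show (∑ b, Y p b • (Pi.single b 1 : Fin n → ℝ)) = ∑ b, Pi.single b (Y p b) by
      refine Finset.sum_congr rfl fun b _ => ?_
      rw [← Pi.single_smul, smul_eq_mul, mul_one]]
    exact (Finset.univ_sum_single (Y p)).symm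
  · rw [Prod.snd_sum]
    simp only [Prod.smul_mk, Prod.snd, hlC]
    funext j
    rw [Finset.sum_apply]
    simp [Finset.sum_neg_distrib, Finset.mul_sum]

lemma clm_hl (Γ : Fin n → TT n → (Fin n → ℝ)) (Y : TT n → (Fin n → ℝ)) (p : TT n)
    (L : TT n →L[ℝ] ℝ) :
    L (hlC Γ Y p) = ∑ b, Y p b * L ((Pi.single b 1 : Fin n → ℝ), -(Γ b p)) := by
  rw [hl_decomp, map_sum]
  exact Finset.sum_congr rfl fun b _ => by rw [map_smul, smul_eq_mul]

lemma dHf_eq (Γ : Fin n → TT n → (Fin n → ℝ)) (f : TT n → ℝ) (p : TT n) (i : Fin n) :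
    dHf Γ f p i = fderiv ℝ f p ((Pi.single i 1 : Fin n → ℝ), 0)
      - ∑ j, Γ i p j * dVf f p j := by
  have h1 : (((Pi.single i 1 : Fin n → ℝ), -(Γ i p)) : TT n)
      = ((Pi.single i 1 : Fin n → ℝ), (0 : Fin n → ℝ)) + (-(((0:Fin n → ℝ), Γ i p) : TT n)) := by
    apply Prod.ext <;> simp
  show fderiv ℝ f p (Pi.single i 1, -(Γ i p)) = _
  rw [h1, map_add, map_neg, snd_decomp (Γ i p), map_sum, sub_eq_add_neg]
  congr 1
  rw [neg_inj]
  exact Finset.sum_congr rfl fun j _ => by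
    rw [map_smul, smul_eq_mul]; rfl

lemma part1 (Γ : Fin n → TT n → (Fin n → ℝ)) (hs : ∀ a b p, Γ a p b = Γ b p a)
    (f g : TT n → ℝ) (p : TT n) :
    ωc (XhamD f p) (XhamD g p)
      = (∑ i, dHf Γ f p i * dVf g p i) - ∑ i, dHf Γ g p i * dVf f p i := by
  have hL : ωc (XhamD f p) (XhamD g p)
      = (∑ i, fderiv ℝ f p ((Pi.single i 1 : Fin n → ℝ), 0) * dVf g p i)
        - ∑ i, fderiv ℝ g p ((Pi.single i 1 : Fin n → ℝ), 0) * dVf f p i := by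
    simp only [ωc, XhamD, mul_neg, Finset.sum_neg_distrib]
    rw [sub_neg_eq_add, neg_add_eq_sub]
    congr 1 <;> exact Finset.sum_congr rfl fun i _ => by ring
  rw [hL]
  simp only [dHf_eq, sub_mul, Finset.sum_sub_distrib]
  have key : ∑ i, (∑ j, Γ i p j * dVf f p j) * dVf g p i
      = ∑ i, (∑ j, Γ i p j * dVf g p j) * dVf f p i := by
    simp only [Finset.sum_mul]
    rw [Finset.sum_comm]
    exact Finset.sum_congr rfl fun a _ => Finset.sum_congr rfl fun b _ => by
      rw [hs a b]; ring
  rw [key]; ring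

lemma part2 (Γ : Fin n → TT n → (Fin n → ℝ))
    (h : ∀ (f g : TT n → ℝ), Differentiable ℝ f → Differentiable ℝ g → ∀ p : TT n,
      ωc (XhamD f p) (XhamD g p)
        = (∑ i, dHf Γ f p i * dVf g p i) - ∑ i, dHf Γ g p i * dVf f p i) :
    ∀ (X Y : TT n → (Fin n → ℝ)) (p : TT n), ωc (hlC Γ X p) (hlC Γ Y p) = 0 := by
  have hs : ∀ a b p, Γ a p b = Γ b p a := by
    intro a b p
    have hfd : ∀ (c : Fin n) (q : TT n), fderiv ℝ (fun q : TT n => q.2 c) q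
        = ((ContinuousLinearMap.proj c).comp
            (ContinuousLinearMap.snd ℝ (Fin n → ℝ) (Fin n → ℝ))) :=
      fun c q => ContinuousLinearMap.fderiv
        (f := (ContinuousLinearMap.proj c).comp
          (ContinuousLinearMap.snd ℝ (Fin n → ℝ) (Fin n → ℝ)))
    have hdiff : ∀ (c : Fin n), Differentiable ℝ (fun q : TT n => q.2 c) :=
      fun c => ((ContinuousLinearMap.proj c).comp
            (ContinuousLinearMap.snd ℝ (Fin n → ℝ) (Fin n → ℝ))).differentiable
    have h2 := h (fun q => q.2 a) (fun q => q.2 b) (hdiff a) (hdiff b) p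
    simp only [ωc, XhamD, dVf, dHf, hfd, ContinuousLinearMap.comp_apply,
      ContinuousLinearMap.coe_snd', ContinuousLinearMap.proj_apply] at h2
    simp only [Pi.zero_apply, Pi.neg_apply, mul_zero, zero_mul, neg_zero, mul_neg,
      Finset.sum_const_zero, sub_zero, zero_sub, neg_mul] at h2
    simp only [Pi.single_apply, mul_ite, mul_one, mul_zero, ite_mul, one_mul, zero_mul,
      Finset.sum_ite_eq', Finset.mem_univ, if_true, neg_neg] at h2
    simp only [Finset.sum_neg_distrib, Finset.sum_ite_eq, Finset.mem_univ, if_true] at h2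
    linarith
  exact sym_to Γ hs

lemma fderiv_apply_pi (f : TT n → (Fin n → ℝ)) (p : TT n) (hf : DifferentiableAt ℝ f p)
    (v : TT n) (i : Fin n) :
    fderiv ℝ f p v i = fderiv ℝ (fun q => f q i) p v := by
  have h : ∀ i, DifferentiableAt ℝ (fun q => f q i) p :=
    fun i => differentiableAt_pi.mp hf i
  exact congrArg (fun L : TT n →L[ℝ] (Fin n → ℝ) => L v i) (fderiv_pi h)

lemma fderiv_V (Γ : Fin n → TT n → (Fin n → ℝ)) (hΓ : ∀ i, Differentiable ℝ (Γ i))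
    (Y : TT n → (Fin n → ℝ)) (hY : Differentiable ℝ Y) (j : Fin n) (p v : TT n) :
    fderiv ℝ (fun q => -(∑ i, Y q i * Γ i q j)) p v
      = -(∑ i, (fderiv ℝ (fun q => Y q i) p v * Γ i p j
          + Y p i * fderiv ℝ (fun q => Γ i q j) p v)) := by
  have hYi : ∀ i, DifferentiableAt ℝ (fun q => Y q i) p :=
    fun i => differentiableAt_pi.mp (hY p) i
  have hGi : ∀ i, DifferentiableAt ℝ (fun q => Γ i q j) p :=
    fun i => differentiableAt_pi.mp (hΓ i p) j
  rw [fderiv_fun_neg, ContinuousLinearMap.neg_apply,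
    fderiv_fun_sum (fun i _ => (hYi i).fun_mul (hGi i)), ContinuousLinearMap.sum_apply, neg_inj]
  exact Finset.sum_congr rfl fun i _ => by
    rw [fderiv_fun_mul (hYi i) (hGi i), ContinuousLinearMap.add_apply,
      ContinuousLinearMap.smul_apply, ContinuousLinearMap.smul_apply,
      smul_eq_mul, smul_eq_mul]
    ring

lemma fderiv_hl (Γ : Fin n → TT n → (Fin n → ℝ)) (hΓ : ∀ i, Differentiable ℝ (Γ i))
    (Y : TT n → (Fin n → ℝ)) (hY : Differentiable ℝ Y) (p v : TT n) :
    fderiv ℝ (hlC Γ Y) p v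
      = (fderiv ℝ Y p v,
         fun j => -(∑ i, (fderiv ℝ (fun q => Y q i) p v * Γ i p j
            + Y p i * fderiv ℝ (fun q => Γ i q j) p v))) := by
  have hV : DifferentiableAt ℝ (fun q : TT n => fun j => -(∑ i, Y q i * Γ i q j)) p :=
    differentiableAt_pi.mpr fun j =>
      (DifferentiableAt.fun_sum fun i _ =>
        (differentiableAt_pi.mp (hY p) i).mul (differentiableAt_pi.mp (hΓ i p) j)).fun_neg
  have e : hlC Γ Y = fun q => (Y q, fun j => -(∑ i, Y q i * Γ i q j)) := rfl
  rw [e, DifferentiableAt.fderiv_prodMk (hY p) hV, ContinuousLinearMap.prod_apply]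
  refine Prod.ext rfl ?_
  funext j
  have h1 := fderiv_apply_pi (fun q => fun j => -(∑ i, Y q i * Γ i q j)) p hV v j
  exact h1.trans (fderiv_V Γ hΓ Y hY j p v)

lemma RC_eq (Γ : Fin n → TT n → (Fin n → ℝ)) (hΓ : ∀ i, Differentiable ℝ (Γ i))
    (X Y : TT n → (Fin n → ℝ)) (hX : Differentiable ℝ X) (hY : Differentiable ℝ Y)
    (p : TT n) (j : Fin n) :
    RC Γ X Y p j = (∑ a, X p a * fderiv ℝ (fun q => Γ a q j) p (hlC Γ Y p))
        - ∑ a, Y p a * fderiv ℝ (fun q => Γ a q j) p (hlC Γ X p) := by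
  have hA := fderiv_hl Γ hΓ X hX p (hlC Γ Y p)
  have hB := fderiv_hl Γ hΓ Y hY p (hlC Γ X p)
  have hYa : ∀ i, fderiv ℝ Y p (hlC Γ X p) i
      = fderiv ℝ (fun q => Y q i) p (hlC Γ X p) :=
    fun i => fderiv_apply_pi Y p (hY p) _ i
  have hXb : ∀ i, fderiv ℝ X p (hlC Γ Y p) i
      = fderiv ℝ (fun q => X q i) p (hlC Γ Y p) :=
    fun i => fderiv_apply_pi X p (hX p) _ i
  show (lieC (hlC Γ X) (hlC Γ Y) p).2 j
      + ∑ i, (lieC (hlC Γ X) (hlC Γ Y) p).1 i * Γ i p j = _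
  have hlie : lieC (hlC Γ X) (hlC Γ Y) p
      = fderiv ℝ (hlC Γ Y) p (hlC Γ X p) - fderiv ℝ (hlC Γ X) p (hlC Γ Y p) := rfl
  rw [hlie, hB, hA, Prod.mk_sub_mk]
  simp only [Pi.sub_apply, hYa, hXb]
  rw [sub_neg_eq_add]
  simp only [← Finset.sum_neg_distrib, ← Finset.sum_add_distrib, sub_mul,
    ← Finset.sum_sub_distrib]
  refine Finset.sum_congr rfl fun i _ => by ring

def σC (Γ : Fin n → TT n → (Fin n → ℝ)) (p : TT n) (a b c : Fin n) : ℝ :=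
  fderiv ℝ (fun q => Γ a q c) p ((Pi.single b 1 : Fin n → ℝ), -(Γ b p))

def Tcyc (Γ : Fin n → TT n → (Fin n → ℝ)) (p : TT n) (u v w : Fin n → ℝ) : ℝ :=
  ∑ j, ∑ a, ∑ b, u a * (v b * σC Γ p a b j) * w j

lemma hexp (Γ : Fin n → TT n → (Fin n → ℝ)) (W : TT n → (Fin n → ℝ)) (p : TT n)
    (a c : Fin n) :
    fderiv ℝ (fun q => Γ a q c) p (hlC Γ W p) = ∑ b, W p b * σC Γ p a b c :=
  clm_hl Γ W p _

lemma σ_sym (Γ : Fin n → TT n → (Fin n → ℝ)) (p : TT n)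
    (hs : ∀ a b q, Γ a q b = Γ b q a) (a b c : Fin n) :
    σC Γ p a b c = σC Γ p c b a := by
  unfold σC
  have e : (fun q => Γ a q c) = (fun q => Γ c q a) := funext fun q => hs a c q
  rw [e]

lemma T_sym (Γ : Fin n → TT n → (Fin n → ℝ)) (p : TT n)
    (hs : ∀ a b q, Γ a q b = Γ b q a) (u v w : Fin n → ℝ) :
    Tcyc Γ p u v w = Tcyc Γ p w v u := by
  unfold Tcyc
  rw [Finset.sum_comm]
  exact Finset.sum_congr rfl fun a _ => Finset.sum_congr rfl fun j _ =>
    Finset.sum_congr rfl fun b _ => by rw [σ_sym Γ p hs a b j]; ring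

lemma T_expand (Γ : Fin n → TT n → (Fin n → ℝ)) (p : TT n) (u v w : Fin n → ℝ) :
    ∑ j, ((∑ a, u a * (∑ b, v b * σC Γ p a b j))
        - ∑ a, v a * (∑ b, u b * σC Γ p a b j)) * w j
      = Tcyc Γ p u v w - Tcyc Γ p v u w := by
  unfold Tcyc
  simp only [sub_mul, Finset.sum_sub_distrib, Finset.sum_mul, Finset.mul_sum]

lemma part3 (Γ : Fin n → TT n → (Fin n → ℝ)) (hΓ : ∀ i, ContDiff ℝ (⊤ : ℕ∞) (Γ i))
    (h : ∀ (X Y : TT n → (Fin n → ℝ)) (p : TT n), ωc (hlC Γ X p) (hlC Γ Y p) = 0)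
    (X Y Z : TT n → (Fin n → ℝ))
    (hX : ContDiff ℝ (⊤ : ℕ∞) X) (hY : ContDiff ℝ (⊤ : ℕ∞) Y)
    (hZ : ContDiff ℝ (⊤ : ℕ∞) Z) (p : TT n) :
    (∑ j, RC Γ X Y p j * Z p j) + (∑ j, RC Γ Y Z p j * X p j)
      + (∑ j, RC Γ Z X p j * Y p j) = 0 := by
  have hΓd : ∀ i, Differentiable ℝ (Γ i) := fun i => (hΓ i).differentiable (by simp)
  have hs : ∀ a b q, Γ a q b = Γ b q a := fun a b q => sym_of Γ h a b q
  have hXd := hX.differentiable (by simp)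
  have hYd := hY.differentiable (by simp)
  have hZd := hZ.differentiable (by simp)
  have key : ∀ (U V : TT n → (Fin n → ℝ)), Differentiable ℝ U → Differentiable ℝ V →
      ∀ (W : TT n → (Fin n → ℝ)),
      ∑ j, RC Γ U V p j * W p j = Tcyc Γ p (U p) (V p) (W p) - Tcyc Γ p (V p) (U p) (W p) := by
    intro U V hU hV W
    rw [← T_expand Γ p (U p) (V p) (W p)]
    refine Finset.sum_congr rfl fun j _ => ?_
    rw [RC_eq Γ hΓd U V hU hV p j]
    simp only [hexp]
  rw [key X Y hXd hYd Z, key Y Z hYd hZd X, key Z X hZd hXd Y,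
    T_sym Γ p hs (X p) (Y p) (Z p), T_sym Γ p hs (Y p) (Z p) (X p),
    T_sym Γ p hs (Z p) (X p) (Y p)]
  ring


/-- For a symmetric nonlinear connection on `T*M` the Poisson bracket is
`{f,g} = ⟨d^H f, d^V g⟩ − ⟨d^H g, d^V f⟩`; conversely this formula for all `f, g` forces
the connection to be symmetric; moreover, for a symmetric connection the curvature
satisfies the cyclic identity `Σ_{cyc} ⟨R(X,Y), Z⟩ = 0`. -/
theorem poisson_bracket_and_cyclic_curvature {n : ℕ}
    (Γ : Fin n → TT n → (Fin n → ℝ)) (hΓ : ∀ i, ContDiff ℝ (⊤ : ℕ∞) (Γ i)) :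
    ((∀ (X Y : TT n → (Fin n → ℝ)) (p : TT n), ωc (hlC Γ X p) (hlC Γ Y p) = 0) →
      ∀ (f g : TT n → ℝ), Differentiable ℝ f → Differentiable ℝ g → ∀ p : TT n,
        ωc (XhamD f p) (XhamD g p)
          = (∑ i, dHf Γ f p i * dVf g p i) - ∑ i, dHf Γ g p i * dVf f p i) ∧
    ((∀ (f g : TT n → ℝ), Differentiable ℝ f → Differentiable ℝ g → ∀ p : TT n,
        ωc (XhamD f p) (XhamD g p)
          = (∑ i, dHf Γ f p i * dVf g p i) - ∑ i, dHf Γ g p i * dVf f p i) →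
      ∀ (X Y : TT n → (Fin n → ℝ)) (p : TT n), ωc (hlC Γ X p) (hlC Γ Y p) = 0) ∧
    ((∀ (X Y : TT n → (Fin n → ℝ)) (p : TT n), ωc (hlC Γ X p) (hlC Γ Y p) = 0) →
      ∀ (X Y Z : TT n → (Fin n → ℝ)),
        ContDiff ℝ (⊤ : ℕ∞) X → ContDiff ℝ (⊤ : ℕ∞) Y → ContDiff ℝ (⊤ : ℕ∞) Z →
        ∀ p : TT n,
          (∑ j, RC Γ X Y p j * Z p j) + (∑ j, RC Γ Y Z p j * X p j)
            + (∑ j, RC Γ Z X p j * Y p j) = 0) := by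
  refine ⟨fun hsym f g _ _ p => part1 Γ (fun a b q => sym_of Γ hsym a b q) f g p,
    part2 Γ, fun hsym X Y Z hX hY hZ p => part3 Γ hΓ hsym X Y Z hX hY hZ p⟩
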